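/- Let v be the strictly positive eigenvector of the perturbed Laplacian L_B = L + D of a connected weighted undirected graph associated with its smallest eigenvalue λ₁ > 0, where D_{ii} > 0 only at the leader vertex r. Suppose each non-leader vertex i selects exactly one in-neighbor j(i) among its graph neighbors satisfying v_{j(i)} < v_i. Then the resulting directed graph (edges j(i) → i for each non-leader i) contains a spanning tree rooted at r. -/
import Mathlib


open Matrix

/-- Let `v` be the strictly positive eigenvector of the perturbed Laplacian `L + diag b`
of a connected weighted undirected graph for its smallest eigenvalue `lam > 0`, where `b`
is supported only at the leader `r`. If each non-leader vertex `i` selects exactly one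
graph neighbor `sel i` with `v (sel i) < v i`, then the directed graph with edges
`sel i → i` contains a spanning tree rooted at `r`. -/
theorem selection_gives_rooted_spanning_tree {n : ℕ}
    (A : Matrix (Fin n) (Fin n) ℝ)
    (hsymm : A.IsSymm)
    (hpos : ∀ i j, 0 ≤ A i j)
    (hconn : ∀ i j : Fin n, Relation.ReflTransGen (fun a b => 0 < A a b) i j)
    (r : Fin n) (b : Fin n → ℝ)
    (hbr : 0 < b r) (hb0 : ∀ i, i ≠ r → b i = 0)
    (L : Matrix (Fin n) (Fin n) ℝ)
    (hL : L = Matrix.diagonal (fun i => ∑ j, A i j) - A)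
    (lam : ℝ) (v : Fin n → ℝ)
    (hlam : 0 < lam)
    (hmin : ∀ (μ : ℝ) (w : Fin n → ℝ), w ≠ 0 →
      (L + Matrix.diagonal b) *ᵥ w = μ • w → lam ≤ μ)
    (hv : (L + Matrix.diagonal b) *ᵥ v = lam • v)
    (hvpos : ∀ i, 0 < v i)
    (sel : Fin n → Fin n)
    (hsel : ∀ i, i ≠ r → 0 < A i (sel i) ∧ v (sel i) < v i) :
    ∀ i : Fin n,
      Relation.ReflTransGen (fun a c => c ≠ r ∧ sel c = a) r i := by
  haveI : IsTrans (Fin n) (fun a b => v a < v b) := ⟨fun _ _ _ => lt_trans⟩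
  haveI : IsIrrefl (Fin n) (fun a b => v a < v b) := ⟨fun a => lt_irrefl (v a)⟩
  have hwf : WellFounded (fun a b : Fin n => v a < v b) :=
    Finite.wellFounded_of_trans_of_irrefl _
  intro i
  induction i using hwf.induction with
  | _ i ih =>
    by_cases hir : i = r
    · subst hir; exact Relation.ReflTransGen.refl
    · obtain ⟨-, hlt⟩ := hsel i hir
      exact (ih (sel i) hlt).tail ⟨hir, rfl⟩
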